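/- For every integer sequence X, nb_valley(X) ≤ nb_peak(X) + 1. -/

import Mathlib

/-- The signature of an integer sequence: the word over `{<,=,>}` (encoded as
`Ordering.lt`, `Ordering.eq`, `Ordering.gt`) comparing consecutive elements. -/
def signature (X : List ℤ) : List Ordering :=
  List.zipWith compare X X.tail

/-- The number of peaks of a word `w` over `{<,=,>}`: the number of positions `j`
with `w_j = '>'` such that there is `i < j` with `w_i = '<'` and `w_k = '='`
for all `i < k < j`. -/
noncomputable def nbPeak (w : List Ordering) : ℕ :=
  {j : ℕ | w[j]? = some Ordering.gt ∧
    ∃ i < j, w[i]? = some Ordering.lt ∧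
      ∀ k, i < k → k < j → w[k]? = some Ordering.eq}.ncard

/-- The number of valleys of a word `w` over `{<,=,>}`: the number of positions `j`
with `w_j = '<'` such that there is `i < j` with `w_i = '>'` and `w_k = '='`
for all `i < k < j`. -/
noncomputable def nbValley (w : List Ordering) : ℕ :=
  {j : ℕ | w[j]? = some Ordering.lt ∧
    ∃ i < j, w[i]? = some Ordering.gt ∧
      ∀ k, i < k → k < j → w[k]? = some Ordering.eq}.ncard

def Pset (w : List Ordering) : Set ℕ :=
  {j : ℕ | w[j]? = some Ordering.gt ∧
    ∃ i < j, w[i]? = some Ordering.lt ∧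
      ∀ k, i < k → k < j → w[k]? = some Ordering.eq}

def Vset (w : List Ordering) : Set ℕ :=
  {j : ℕ | w[j]? = some Ordering.lt ∧
    ∃ i < j, w[i]? = some Ordering.gt ∧
      ∀ k, i < k → k < j → w[k]? = some Ordering.eq}

lemma mem_len {w : List Ordering} {j : ℕ} {a : Ordering} (h : w[j]? = some a) :
    j < w.length := by
  rcases List.getElem?_eq_some_iff.1 h with ⟨h, _⟩; exact h

lemma peak_between (w : List Ordering) {j1 j2 : ℕ}
    (h1 : j1 ∈ Vset w) (h2 : j2 ∈ Vset w) (h12 : j1 < j2) :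
    ∃ m, m ∈ Pset w ∧ j1 < m ∧ m < j2 := by
  classical
  obtain ⟨hj1, -⟩ := h1
  obtain ⟨hj2, i, hij2, hi, heq⟩ := h2
  have hj1i : j1 < i := by
    rcases lt_trichotomy j1 i with h | h | h
    · exact h
    · subst h; rw [hj1] at hi; cases hi
    · have := heq j1 h h12; rw [hj1] at this; cases this
  have hex : ∃ m, j1 < m ∧ m ≤ i ∧ w[m]? = some Ordering.gt := ⟨i, hj1i, le_refl i, hi⟩
  set m := Nat.find hex with hmdef
  obtain ⟨hm1, hm2, hm3⟩ := Nat.find_spec hex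
  have hmin : ∀ k, j1 < k → k ≤ i → w[k]? = some Ordering.gt → m ≤ k :=
    fun k a b c => Nat.find_min' hex ⟨a, b, c⟩
  -- greatest i' ≤ m-1 with j1 ≤ i' and w[i']? ≠ some eq
  set Q : ℕ → Prop := fun k => j1 ≤ k ∧ w[k]? ≠ some Ordering.eq with hQ
  have hQj1 : Q j1 := ⟨le_refl j1, by rw [hj1]; simp⟩
  have hj1m : j1 ≤ m - 1 := Nat.le_sub_one_of_lt hm1
  set i' := Nat.findGreatest Q (m - 1) with hi'def
  have hQi' : Q i' := Nat.findGreatest_spec hj1m hQj1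
  have hi'le : i' ≤ m - 1 := Nat.findGreatest_le _
  have hi'm : i' < m := by omega
  have hi'len : i' < w.length := lt_trans (lt_of_lt_of_le hi'm (le_trans hm2 (le_of_lt hij2))) (mem_len hj2)
  have hi'lt : w[i']? = some Ordering.lt := by
    rcases eq_or_lt_of_le hQi'.1 with h | h
    · rw [← h]; exact hj1
    · have : w[i']? = some w[i'] := List.getElem?_eq_getElem hi'len
      rcases ho : w[i'] with _ | _ | _
      · rw [this, ho]
      · exact absurd (by rw [this, ho]) hQi'.2
      · have := hmin i' h (le_trans (le_of_lt hi'm) hm2) (by rw [this, ho])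
        omega
  have hbetw : ∀ k, i' < k → k < m → w[k]? = some Ordering.eq := by
    intro k hk1 hk2
    have hk3 : k ≤ m - 1 := Nat.le_sub_one_of_lt hk2
    by_contra hne3
    exact Nat.findGreatest_is_greatest hk1 hk3 ⟨le_trans hQi'.1 (le_of_lt hk1), hne3⟩
  exact ⟨m, ⟨hm3, i', hi'm, hi'lt, hbetw⟩, hm1, lt_of_le_of_lt hm2 hij2⟩

/-- For every integer sequence `X`, `nb_valley(X) ≤ nb_peak(X) + 1`. -/
theorem nbValley_le_nbPeak_add_one (X : List ℤ) (hX : X ≠ []) :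
    nbValley (signature X) ≤ nbPeak (signature X) + 1 := by
  classical
  set w := signature X with hw
  show (Vset w).ncard ≤ (Pset w).ncard + 1
  have hVfin : (Vset w).Finite :=
    Set.Finite.subset (Set.finite_Iio w.length) (fun j hj => mem_len hj.1)
  have hPfin : (Pset w).Finite :=
    Set.Finite.subset (Set.finite_Iio w.length) (fun j hj => mem_len hj.1)
  rcases (Vset w).eq_empty_or_nonempty with he | hne
  · rw [he]; simp
  · have hne' : ∃ n, n ∈ Vset w := hne
    set j0 := Nat.find hne' with hj0def
    have hj0V : j0 ∈ Vset w := Nat.find_spec hne'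
    have hj0min : ∀ j ∈ Vset w, j0 ≤ j := fun j hj => Nat.find_min' hne' hj
    -- the map
    set g : ℕ → ℕ := fun j => Nat.findGreatest (· ∈ Vset w) (j - 1) with hg
    have hgprop : ∀ j ∈ Vset w \ {j0}, g j ∈ Vset w ∧ g j < j := by
      intro j hj
      have hj0j : j0 < j := lt_of_le_of_ne (hj0min j hj.1) (Ne.symm hj.2)
      have h1 : j0 ≤ j - 1 := Nat.le_sub_one_of_lt hj0j
      refine ⟨Nat.findGreatest_spec h1 hj0V, ?_⟩
      have h2 : g j ≤ j - 1 := Nat.findGreatest_le _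
      omega
    set f : ℕ → ℕ := fun j =>
      if h : j ∈ Vset w \ {j0} then
        (peak_between w (hgprop j h).1 h.1 (hgprop j h).2).choose
      else 0 with hf
    have hfprop : ∀ j (h : j ∈ Vset w \ {j0}),
        f j ∈ Pset w ∧ g j < f j ∧ f j < j := by
      intro j h
      have := (peak_between w (hgprop j h).1 h.1 (hgprop j h).2).choose_spec
      simp only [hf, dif_pos h]
      exact this
    have hmaps : ∀ j ∈ Vset w \ {j0}, f j ∈ Pset w := fun j h => (hfprop j h).1
    have H : ∀ a b, a ∈ Vset w \ {j0} → b ∈ Vset w \ {j0} → a < b → f a ≠ f b := by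
      intro a b ha hb hlt
      have h1 : f a < a := (hfprop a ha).2.2
      have h2 : g b < f b := (hfprop b hb).2.1
      have h3 : a ≤ g b := Nat.le_findGreatest (Nat.le_sub_one_of_lt hlt) ha.1
      omega
    have hinj : Set.InjOn f (Vset w \ {j0}) := by
      intro a ha b hb hab
      rcases lt_trichotomy a b with h | h | h
      · exact absurd hab (H a b ha hb h)
      · exact h
      · exact absurd hab.symm (H b a hb ha h)
    have key : (Vset w \ {j0}).ncard ≤ (Pset w).ncard :=
      Set.ncard_le_ncard_of_injOn f hmaps hinj hPfin
    have : (Vset w \ {j0}).ncard + 1 = (Vset w).ncard :=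
      Set.ncard_diff_singleton_add_one hj0V hVfin
    omega
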